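/- (Case α ≤ β of the information-gain bound.) If α ≤ β, where α := (1/|A|) Σ_{ℓ∈A} H[X_ℓ] and β := (1/|M \ A|) Σ_{ℓ∈M\A} H[X_ℓ], then the expected information gain satisfies Ĩ(A) ≤ γ(α − β) + |A|·α ≤ |A|·α = C(A), where γ := |A|/|M|. -/

import Mathlib

open scoped BigOperators

/-- Probability that the random variable `X` takes value `x`, under pmf `p` on `Ω`. -/
noncomputable def probOf {Ω V : Type*} [Fintype Ω] (p : Ω → ℝ) (X : Ω → V) (x : V) : ℝ :=
  letI := Classical.decEq V
  ∑ ω : Ω, if X ω = x then p ω else 0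

/-- Shannon entropy `H[X]` of a random variable with finite alphabet. -/
noncomputable def entropy {Ω V : Type*} [Fintype Ω] [Fintype V] (p : Ω → ℝ) (X : Ω → V) : ℝ :=
  ∑ x : V, Real.negMulLog (probOf p X x)

/-- Conditional entropy `H[X | Y] = H[(X,Y)] - H[Y]`. -/
noncomputable def condEntropy {Ω V W : Type*} [Fintype Ω] [Fintype V] [Fintype W]
    (p : Ω → ℝ) (X : Ω → V) (Y : Ω → W) : ℝ :=
  entropy p (fun ω => (X ω, Y ω)) - entropy p Y

/-- Mutual information `I[X ; Y] = H[X] + H[Y] - H[(X,Y)]`. -/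
noncomputable def mutualInfo {Ω V W : Type*} [Fintype Ω] [Fintype V] [Fintype W]
    (p : Ω → ℝ) (X : Ω → V) (Y : Ω → W) : ℝ :=
  entropy p X + entropy p Y - entropy p (fun ω => (X ω, Y ω))

section AuxLemmas
open Real Finset


section aux
variable {Ω : Type*} [Fintype Ω] {p : Ω → ℝ}

lemma probOf_nonneg (hp0 : ∀ ω, 0 ≤ p ω) {V : Type*} (X : Ω → V) (x : V) :
    0 ≤ probOf p X x := by
  unfold probOf
  exact Finset.sum_nonneg fun ω _ => by split <;> simp [hp0 ω]

lemma sum_probOf {V : Type*} [Fintype V] (X : Ω → V) :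
    ∑ x : V, probOf p X x = ∑ ω : Ω, p ω := by
  classical
  unfold probOf
  rw [Finset.sum_comm]
  exact Finset.sum_congr rfl fun ω _ => by simp

lemma probOf_comp {V W : Type*} [Fintype V] [DecidableEq W] (X : Ω → V) (f : V → W) (w : W) :
    probOf p (fun ω => f (X ω)) w = ∑ x ∈ Finset.univ.filter (fun x => f x = w), probOf p X x := by
  classical
  unfold probOf
  rw [Finset.sum_comm]
  refine Finset.sum_congr rfl fun ω _ => ?_
  rw [Finset.sum_ite_eq _ (X ω)]
  simp

lemma negMulLog_sum_le {ι : Type*} (s : Finset ι) (f : ι → ℝ) (hf : ∀ i ∈ s, 0 ≤ f i) :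
    Real.negMulLog (∑ i ∈ s, f i) ≤ ∑ i ∈ s, Real.negMulLog (f i) := by
  rw [Real.negMulLog, neg_mul, Finset.sum_mul, ← Finset.sum_neg_distrib]
  refine Finset.sum_le_sum fun i hi => ?_
  rw [Real.negMulLog, neg_mul, neg_le_neg_iff]
  rcases eq_or_lt_of_le (hf i hi) with h | h
  · simp [← h]
  · refine mul_le_mul_of_nonneg_left (Real.log_le_log h ?_) (hf i hi)
    exact Finset.single_le_sum hf hi

lemma entropy_comp_le (hp0 : ∀ ω, 0 ≤ p ω) {V W : Type*} [Fintype V] [Fintype W]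
    (X : Ω → V) (f : V → W) :
    entropy p (fun ω => f (X ω)) ≤ entropy p X := by
  classical
  unfold entropy
  rw [← Finset.sum_fiberwise_of_maps_to (fun x _ => Finset.mem_univ (f x))
    (fun x => Real.negMulLog (probOf p X x))]
  refine Finset.sum_le_sum fun w _ => ?_
  rw [probOf_comp X f w]
  exact negMulLog_sum_le _ _ fun x _ => probOf_nonneg hp0 X x

/-- Gibbs' inequality. -/
lemma gibbs {ι : Type*} [Fintype ι] (q t : ι → ℝ) (hq : ∀ i, 0 ≤ q i) (ht : ∀ i, 0 ≤ t i)
    (hqt : ∀ i, q i ≠ 0 → t i ≠ 0) (h1 : ∑ i, q i = 1) (h2 : ∑ i, t i ≤ 1) :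
    ∑ i, q i * Real.log (t i) ≤ ∑ i, q i * Real.log (q i) := by
  have key : ∑ i, q i * (Real.log (t i) - Real.log (q i)) ≤ ∑ i, (t i - q i) := by
    refine Finset.sum_le_sum fun i _ => ?_
    rcases eq_or_lt_of_le (hq i) with h | h
    · simp [← h, ht i]
    · have htpos : 0 < t i := lt_of_le_of_ne (ht i) (Ne.symm (hqt i (ne_of_gt h)))
      have : Real.log (t i) - Real.log (q i) = Real.log (t i / q i) := by
        rw [Real.log_div (ne_of_gt htpos) (ne_of_gt h)]
      rw [this]
      calc q i * Real.log (t i / q i) ≤ q i * (t i / q i - 1) :=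
            mul_le_mul_of_nonneg_left (Real.log_le_sub_one_of_pos (by positivity)) (hq i)
        _ = t i - q i := by field_simp
  have : ∑ i, (t i - q i) ≤ 0 := by
    rw [Finset.sum_sub_distrib, h1]; linarith
  have h3 := key.trans this
  simp only [mul_sub, Finset.sum_sub_distrib] at h3
  linarith

end aux

section pair
variable {Ω : Type*} [Fintype Ω] {p : Ω → ℝ}

lemma entropy_pair_le (hp0 : ∀ ω, 0 ≤ p ω) (hp1 : ∑ ω : Ω, p ω = 1)
    {V W : Type*} [Fintype V] [Fintype W] (U : Ω → V) (Wf : Ω → W) :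
    entropy p (fun ω => (U ω, Wf ω)) ≤ entropy p U + entropy p Wf := by
  classical
  set q : V × W → ℝ := probOf p (fun ω => (U ω, Wf ω)) with hq_def
  set r : V → ℝ := probOf p U with hr_def
  set s : W → ℝ := probOf p Wf with hs_def
  have hqr : ∀ v, r v = ∑ w, q (v, w) := by
    intro v
    simp only [hq_def, hr_def, probOf]
    rw [Finset.sum_comm]
    refine Finset.sum_congr rfl fun ω _ => ?_
    simp [Prod.ext_iff, ite_and, Finset.sum_ite_eq]
  have hqs : ∀ w, s w = ∑ v, q (v, w) := by
    intro w
    simp only [hq_def, hs_def, probOf]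
    rw [Finset.sum_comm]
    refine Finset.sum_congr rfl fun ω _ => ?_
    simp [Prod.ext_iff, ite_and, Finset.sum_ite_eq]
  have hq0 : ∀ x, 0 ≤ q x := probOf_nonneg hp0 _
  have hr0 : ∀ v, 0 ≤ r v := probOf_nonneg hp0 _
  have hs0 : ∀ w, 0 ≤ s w := probOf_nonneg hp0 _
  have hsum_q : ∑ x : V × W, q x = 1 := by rw [hq_def, sum_probOf, hp1]
  have hsum_r : ∑ v : V, r v = 1 := by rw [hr_def, sum_probOf, hp1]
  have hsum_s : ∑ w : W, s w = 1 := by rw [hs_def, sum_probOf, hp1]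
  have hqler : ∀ x : V × W, q x ≤ r x.1 := by
    rintro ⟨v, w⟩
    rw [hqr v]
    exact Finset.single_le_sum (f := fun w => q (v, w)) (fun w _ => hq0 _) (Finset.mem_univ w)
  have hqles : ∀ x : V × W, q x ≤ s x.2 := by
    rintro ⟨v, w⟩
    rw [hqs w]
    exact Finset.single_le_sum (f := fun v => q (v, w)) (fun v _ => hq0 _) (Finset.mem_univ v)
  have hHU : entropy p U = ∑ x : V × W, -(q x * Real.log (r x.1)) := by
    rw [Fintype.sum_prod_type]
    unfold entropy
    simp only [← hr_def]
    refine Finset.sum_congr rfl fun v _ => ?_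
    have h : ∑ y : W, -(q (v, y) * Real.log (r v)) = Real.negMulLog (r v) := by
      rw [Finset.sum_neg_distrib, ← Finset.sum_mul, ← hqr v, Real.negMulLog, neg_mul]
    exact h.symm
  have hHW : entropy p Wf = ∑ x : V × W, -(q x * Real.log (s x.2)) := by
    rw [Fintype.sum_prod_type, Finset.sum_comm]
    unfold entropy
    simp only [← hs_def]
    refine Finset.sum_congr rfl fun w _ => ?_
    have h : ∑ y : V, -(q (y, w) * Real.log (s w)) = Real.negMulLog (s w) := by
      rw [Finset.sum_neg_distrib, ← Finset.sum_mul, ← hqs w, Real.negMulLog, neg_mul]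
    exact h.symm
  have key := gibbs q (fun x => r x.1 * s x.2) hq0 (fun x => mul_nonneg (hr0 _) (hs0 _))
    (fun x hx => by
      have h : 0 < q x := lt_of_le_of_ne (hq0 x) (Ne.symm hx)
      exact mul_ne_zero (ne_of_gt (lt_of_lt_of_le h (hqler x)))
        (ne_of_gt (lt_of_lt_of_le h (hqles x))))
    hsum_q
    (by
      rw [Fintype.sum_prod_type]
      simp_rw [← Finset.mul_sum]
      rw [← Finset.sum_mul, hsum_r, hsum_s, one_mul])
  have split : ∑ x : V × W, q x * Real.log (r x.1 * s x.2)
      = ∑ x : V × W, (q x * Real.log (r x.1) + q x * Real.log (s x.2)) := by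
    refine Finset.sum_congr rfl fun x _ => ?_
    rcases eq_or_lt_of_le (hq0 x) with h | h
    · rw [← h]; ring
    · rw [Real.log_mul (ne_of_gt (lt_of_lt_of_le h (hqler x)))
        (ne_of_gt (lt_of_lt_of_le h (hqles x))), mul_add]
  rw [split, Finset.sum_add_distrib] at key
  have hpair : entropy p (fun ω => (U ω, Wf ω)) = ∑ x : V × W, -(q x * Real.log (q x)) := by
    unfold entropy
    exact Finset.sum_congr rfl fun x _ => by rw [Real.negMulLog, neg_mul]
  rw [hpair, hHU, hHW]
  simp only [Finset.sum_neg_distrib]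
  linarith

end pair

section tuple
variable {Ω : Type*} [Fintype Ω] {p : Ω → ℝ}

lemma entropy_eq_zero_of_subsingleton (hp1 : ∑ ω : Ω, p ω = 1) {V : Type*} [Fintype V]
    (h : ∀ x y : V, x = y) (X : Ω → V) : entropy p X = 0 := by
  unfold entropy
  refine Finset.sum_eq_zero fun x _ => ?_
  have hx : probOf p X x = 1 := by
    unfold probOf
    rw [← hp1]
    exact Finset.sum_congr rfl fun ω _ => by rw [if_pos (h _ _)]
  rw [hx, Real.negMulLog_one]

lemma entropy_tuple_le {ι : Type*} [DecidableEq ι]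
    (hp0 : ∀ ω, 0 ≤ p ω) (hp1 : ∑ ω : Ω, p ω = 1)
    (V : ι → Type*) [∀ ℓ, Fintype (V ℓ)] (X : ∀ ℓ, Ω → V ℓ) (s : Finset ι) :
    entropy p (fun ω (a : s) => X a.1 ω) ≤ ∑ ℓ ∈ s, entropy p (X ℓ) := by
  classical
  induction s using Finset.induction_on with
  | empty =>
    rw [Finset.sum_empty]
    rw [entropy_eq_zero_of_subsingleton hp1
      (fun x y => funext fun a => absurd a.2 (Finset.notMem_empty a.1))]
  | @insert i t hi ih =>
    let g : (V i × ∀ a : t, V a.1) → (∀ a : (insert i t : Finset ι), V a.1) :=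
      fun z a =>
        if h : a.1 = i then cast (congrArg V h).symm z.1
        else z.2 ⟨a.1, Finset.mem_of_mem_insert_of_ne a.2 h⟩
    have hYeq : (fun ω (a : (insert i t : Finset ι)) => X a.1 ω)
        = fun ω => g (X i ω, fun a : t => X a.1 ω) := by
      funext ω a
      obtain ⟨a, ha⟩ := a
      show X a ω = dite _ _ _
      by_cases h : a = i
      · subst h
        rw [dif_pos rfl]
        simp
      · rw [dif_neg h]
    calc entropy p (fun ω (a : (insert i t : Finset ι)) => X a.1 ω)
        = entropy p (fun ω => g (X i ω, fun a : t => X a.1 ω)) := by rw [hYeq]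
      _ ≤ entropy p (fun ω => (X i ω, fun a : t => X a.1 ω)) :=
          entropy_comp_le hp0 _ g
      _ ≤ entropy p (X i) + entropy p (fun ω (a : t) => X a.1 ω) :=
          entropy_pair_le hp0 hp1 _ _
      _ ≤ entropy p (X i) + ∑ ℓ ∈ t, entropy p (X ℓ) := by linarith [ih]
      _ = ∑ ℓ ∈ insert i t, entropy p (X ℓ) := by rw [Finset.sum_insert hi]

end tuple

end AuxLemmas

/-- case `α ≤ β` of the information-gain bound: if `α ≤ β` then
`Ĩ(A) ≤ γ(α − β) + |A|·α ≤ |A|·α = C(A)`. -/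
theorem info_gain_bound_case_le
    {Ω ι : Type*} [Fintype Ω] [DecidableEq ι]
    (p : Ω → ℝ) (hp0 : ∀ ω, 0 ≤ p ω) (hp1 : ∑ ω : Ω, p ω = 1)
    (M A : Finset ι) (hAM : A ⊆ M) (hA : A.Nonempty) (hMA : (M \ A).Nonempty)
    (V : ι → Type*) [∀ ℓ, Fintype (V ℓ)]
    (X : ∀ ℓ, Ω → V ℓ) :
    -- the joint random variable of the coordinates indexed by A
    let Y : Ω → (∀ a : A, V a.1) := fun ω (a : A) => X a.1 ω
    -- immediate cost C(A)
    let C : ℝ := ∑ ℓ ∈ A, entropy p (X ℓ)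
    -- state uncertainty H̄(M)
    let Hbar : ℝ := (1 / (M.card : ℝ)) * ∑ ℓ ∈ M, entropy p (X ℓ)
    -- expected information gain Ĩ(A)
    let Itilde : ℝ :=
      Hbar - (1 / ((M \ A).card : ℝ)) * ∑ ℓ ∈ M \ A, condEntropy p (X ℓ) Y
    let α : ℝ := (1 / (A.card : ℝ)) * ∑ ℓ ∈ A, entropy p (X ℓ)
    let β : ℝ := (1 / ((M \ A).card : ℝ)) * ∑ ℓ ∈ M \ A, entropy p (X ℓ)
    let γ : ℝ := (A.card : ℝ) / (M.card : ℝ)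
    α ≤ β →
      Itilde ≤ γ * (α - β) + (A.card : ℝ) * α ∧
      γ * (α - β) + (A.card : ℝ) * α ≤ (A.card : ℝ) * α ∧
      (A.card : ℝ) * α = C := by
  intro Y C Hbar Itilde α β γ hαβ
  have hYdef : Y = fun ω (a : A) => X a.1 ω := rfl
  have hCdef : C = ∑ ℓ ∈ A, entropy p (X ℓ) := rfl
  have hHdef : Hbar = (1 / (M.card : ℝ)) * ∑ ℓ ∈ M, entropy p (X ℓ) := rfl
  have hIdef : Itilde
      = Hbar - (1 / ((M \ A).card : ℝ)) * ∑ ℓ ∈ M \ A, condEntropy p (X ℓ) Y := rfl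
  have hαdef : α = (1 / (A.card : ℝ)) * ∑ ℓ ∈ A, entropy p (X ℓ) := rfl
  have hβdef : β = (1 / ((M \ A).card : ℝ)) * ∑ ℓ ∈ M \ A, entropy p (X ℓ) := rfl
  have hγdef : γ = (A.card : ℝ) / (M.card : ℝ) := rfl
  have ha : (0 : ℝ) < (A.card : ℝ) := by exact_mod_cast Finset.card_pos.mpr hA
  have hd : (0 : ℝ) < ((M \ A).card : ℝ) := by exact_mod_cast Finset.card_pos.mpr hMA
  have hm : (M.card : ℝ) = (A.card : ℝ) + ((M \ A).card : ℝ) := by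
    have := Finset.card_sdiff_add_card_eq_card hAM
    push_cast [← this]
    ring
  have hm0 : (0 : ℝ) < (M.card : ℝ) := by rw [hm]; linarith
  have hα' : ∑ ℓ ∈ A, entropy p (X ℓ) = (A.card : ℝ) * α := by
    rw [hαdef]; field_simp
  have hβ' : ∑ ℓ ∈ M \ A, entropy p (X ℓ) = ((M \ A).card : ℝ) * β := by
    rw [hβdef, ← mul_assoc, mul_one_div_cancel hd.ne', one_mul]
  have hMsplit : ∑ ℓ ∈ M, entropy p (X ℓ)
      = ∑ ℓ ∈ M \ A, entropy p (X ℓ) + ∑ ℓ ∈ A, entropy p (X ℓ) :=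
    (Finset.sum_sdiff hAM).symm
  -- key information-theoretic inequality
  have hcond : ∀ ℓ ∈ M \ A,
      entropy p (X ℓ) - ∑ ℓ' ∈ A, entropy p (X ℓ') ≤ condEntropy p (X ℓ) Y := by
    intro ℓ _
    have h1 : entropy p (X ℓ) ≤ entropy p (fun ω => (X ℓ ω, Y ω)) :=
      entropy_comp_le hp0 (fun ω => (X ℓ ω, Y ω)) Prod.fst
    have h2 : entropy p Y ≤ ∑ ℓ' ∈ A, entropy p (X ℓ') :=
      entropy_tuple_le hp0 hp1 V X A
    unfold condEntropy
    linarith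
  have hsum := Finset.sum_le_sum hcond
  rw [Finset.sum_sub_distrib, Finset.sum_const, nsmul_eq_mul] at hsum
  refine ⟨?_, ?_, ?_⟩
  · have h5 : Itilde ≤ Hbar - (1 / ((M \ A).card : ℝ)) *
        (((M \ A).card : ℝ) * β - ((M \ A).card : ℝ) * ((A.card : ℝ) * α)) := by
      rw [hIdef]
      have hle : ((M \ A).card : ℝ) * β - ((M \ A).card : ℝ) * ((A.card : ℝ) * α)
          ≤ ∑ ℓ ∈ M \ A, condEntropy p (X ℓ) Y := by
        rw [← hβ', ← hα']
        exact hsum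
      have := mul_le_mul_of_nonneg_left hle (div_nonneg zero_le_one hd.le :
        (0:ℝ) ≤ 1 / ((M \ A).card : ℝ))
      linarith
    have heq : Hbar - (1 / ((M \ A).card : ℝ)) *
        (((M \ A).card : ℝ) * β - ((M \ A).card : ℝ) * ((A.card : ℝ) * α))
        = γ * (α - β) + (A.card : ℝ) * α := by
      rw [hHdef, hMsplit, hβ', hα', hγdef, hm]
      have hd' := hd.ne'
      have hm' : (A.card : ℝ) + ((M \ A).card : ℝ) ≠ 0 := by linarith
      field_simp
      ring
    exact le_of_le_of_eq h5 heq
  · have hγ0 : 0 ≤ γ := by rw [hγdef]; exact div_nonneg ha.le hm0.le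
    nlinarith [mul_nonneg hγ0 (by linarith : (0:ℝ) ≤ β - α)]
  · rw [hαdef, hCdef]; rw [← mul_assoc, mul_one_div_cancel ha.ne', one_mul]
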